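/- The boundary value problem u'''(t) = -(1/4)[t + e^{u(t)} + (u'(t))² + u''(t)] on (0,1) with u(0)=u''(0)=u'(1)=0 has a unique monotone (nondecreasing) nonnegative solution u satisfying 0 ≤ u(t) ≤ 0.835/3, 0 ≤ u'(t) ≤ 0.835/2, |u''(t)| ≤ 0.835 on [0,1]. -/

import Mathlib

/-- `u` solves the ODE of Example 4.4.1 on `(0,1)` with `u(0)=u''(0)=u'(1)=0`. -/
def IsSolution (u : ℝ → ℝ) : Prop :=
  ContDiff ℝ 2 u ∧
  (∀ t ∈ Set.Ioo (0:ℝ) 1,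
    HasDerivAt (deriv (deriv u))
      (-(1 / 4) * (t + Real.exp (u t) + (deriv u t) ^ 2 + deriv (deriv u) t)) t) ∧
  u 0 = 0 ∧ deriv (deriv u) 0 = 0 ∧ deriv u 1 = 0

/-- bounds of Example 4.4.1. -/
def InBounds (u : ℝ → ℝ) : Prop :=
  ∀ t ∈ Set.Icc (0:ℝ) 1,
    u t ∈ Set.Icc 0 ((0.835 : ℝ) / 3) ∧ deriv u t ∈ Set.Icc 0 ((0.835 : ℝ) / 2) ∧
      |deriv (deriv u) t| ≤ (0.835 : ℝ)

open MeasureTheory intervalIntegral Set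
noncomputable section
namespace Ex441

abbrev X := C(Set.Icc (0:ℝ) 1, ℝ)

def ext (h : X) : ℝ → ℝ := fun s => h (Set.projIcc 0 1 zero_le_one s)

lemma cont_ext (h : X) : Continuous (ext h) := h.continuous.comp continuous_projIcc

lemma ext_eq (h : X) {s : ℝ} (hs : s ∈ Set.Icc (0:ℝ) 1) : ext h s = h ⟨s, hs⟩ := by
  simp [ext, Set.projIcc_of_mem zero_le_one hs]

def PB (h : X) : ℝ → ℝ := fun t => ∫ s in (0:ℝ)..t, ext h s
def PA (h : X) : ℝ → ℝ := fun t => ∫ s in t..(1:ℝ), PB h s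
def PU (h : X) : ℝ → ℝ := fun t => ∫ s in (0:ℝ)..t, PA h s

lemma hasDerivAt_PB (h : X) (t : ℝ) : HasDerivAt (PB h) (ext h t) t :=
  ((cont_ext h).integral_hasStrictDerivAt 0 t).hasDerivAt

lemma diff_PB (h : X) : Differentiable ℝ (PB h) :=
  fun t => (hasDerivAt_PB h t).differentiableAt

lemma cont_PB (h : X) : Continuous (PB h) := (diff_PB h).continuous

lemma hasDerivAt_PA (h : X) (t : ℝ) : HasDerivAt (PA h) (-(PB h t)) t := by
  have he : PA h = fun t => -∫ s in (1:ℝ)..t, PB h s := by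
    funext t
    rw [← intervalIntegral.integral_symm]
    rfl
  rw [he]
  exact ((cont_PB h).integral_hasStrictDerivAt 1 t).hasDerivAt.neg

lemma diff_PA (h : X) : Differentiable ℝ (PA h) :=
  fun t => (hasDerivAt_PA h t).differentiableAt

lemma cont_PA (h : X) : Continuous (PA h) := (diff_PA h).continuous

lemma hasDerivAt_PU (h : X) (t : ℝ) : HasDerivAt (PU h) (PA h t) t :=
  ((cont_PA h).integral_hasStrictDerivAt 0 t).hasDerivAt

lemma diff_PU (h : X) : Differentiable ℝ (PU h) :=
  fun t => (hasDerivAt_PU h t).differentiableAt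

lemma cont_PU (h : X) : Continuous (PU h) := (diff_PU h).continuous

lemma deriv_PU (h : X) : deriv (PU h) = PA h := funext fun t => (hasDerivAt_PU h t).deriv
lemma deriv_PA (h : X) : deriv (PA h) = fun t => -(PB h t) :=
  funext fun t => (hasDerivAt_PA h t).deriv

lemma contDiff_PU (h : X) : ContDiff ℝ 2 (PU h) := by
  rw [show ((2:WithTop ℕ∞)) = 1 + 1 by norm_num, contDiff_succ_iff_deriv]
  refine ⟨diff_PU h, by simp, ?_⟩
  rw [deriv_PU, contDiff_one_iff_deriv, deriv_PA]
  exact ⟨diff_PA h, (cont_PB h).neg⟩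

lemma int_linear (c a b : ℝ) : ∫ s in a..b, c * s = c * ((b^2 - a^2)/2) := by
  rw [intervalIntegral.integral_const_mul, integral_id]

lemma int_poly (c a b : ℝ) : ∫ s in a..b, c * (1 - s^2)/2
    = c * ((b - b^3/3) - (a - a^3/3))/2 := by
  have h1 : (fun s : ℝ => c * (1 - s^2)/2) = fun s : ℝ => c/2 - c/2 * s^2 := by
    funext s; ring
  rw [h1, intervalIntegral.integral_sub (f := fun _ => c/2) (g := fun s => c/2 * s^2) (intervalIntegrable_const)
    (((continuous_const.mul (continuous_pow 2)).intervalIntegrable a b)),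
    intervalIntegral.integral_const, intervalIntegral.integral_const_mul, integral_pow]
  push_cast [smul_eq_mul]; ring

def S : Set X := {h : X | ∀ x, h x ∈ Set.Icc (0:ℝ) 0.835}

lemma ext_mem {h : X} (hS : h ∈ S) (s : ℝ) : ext h s ∈ Set.Icc (0:ℝ) 0.835 := hS _

lemma PB_nonneg {h : X} (hS : h ∈ S) {t : ℝ} (ht : 0 ≤ t) : 0 ≤ PB h t :=
  intervalIntegral.integral_nonneg ht (fun u _ => (ext_mem hS u).1)

lemma PB_le {h : X} (hS : h ∈ S) {t : ℝ} (ht : 0 ≤ t) : PB h t ≤ 0.835 * t := by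
  have := intervalIntegral.integral_mono_on (μ := volume) (a := 0) (b := t)
    (f := ext h) (g := fun _ => (0.835:ℝ)) ht ((cont_ext h).intervalIntegrable 0 t)
    intervalIntegrable_const (fun x _ => (ext_mem hS x).2)
  simpa [PB, mul_comm] using this

lemma PA_nonneg {h : X} (hS : h ∈ S) {t : ℝ} (ht : t ∈ Set.Icc (0:ℝ) 1) : 0 ≤ PA h t :=
  intervalIntegral.integral_nonneg ht.2 (fun u hu => PB_nonneg hS (le_trans ht.1 hu.1))

lemma PA_le {h : X} (hS : h ∈ S) {t : ℝ} (ht : t ∈ Set.Icc (0:ℝ) 1) :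
    PA h t ≤ 0.835 * (1 - t^2)/2 := by
  have hm := intervalIntegral.integral_mono_on (μ := volume) (a := t) (b := 1)
    (f := PB h) (g := fun s => 0.835 * s) ht.2 ((cont_PB h).intervalIntegrable t 1)
    ((continuous_const.mul continuous_id).intervalIntegrable t 1)
    (fun x hx => PB_le hS (le_trans ht.1 hx.1))
  calc PA h t ≤ ∫ s in t..(1:ℝ), 0.835 * s := hm
    _ = 0.835 * (1 - t^2)/2 := by rw [int_linear]; ring

lemma PA_le_half {h : X} (hS : h ∈ S) {t : ℝ} (ht : t ∈ Set.Icc (0:ℝ) 1) :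
    PA h t ≤ 0.835 / 2 := by
  have := PA_le hS ht
  nlinarith [sq_nonneg t]

lemma PU_nonneg {h : X} (hS : h ∈ S) {t : ℝ} (ht : t ∈ Set.Icc (0:ℝ) 1) : 0 ≤ PU h t :=
  intervalIntegral.integral_nonneg ht.1
    (fun u hu => PA_nonneg hS ⟨hu.1, le_trans hu.2 ht.2⟩)

lemma PU_le {h : X} (hS : h ∈ S) {t : ℝ} (ht : t ∈ Set.Icc (0:ℝ) 1) :
    PU h t ≤ 0.835 / 3 := by
  have hm := intervalIntegral.integral_mono_on (μ := volume) (a := 0) (b := t)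
    (f := PA h) (g := fun s => 0.835 * (1 - s^2)/2) ht.1
    ((cont_PA h).intervalIntegrable 0 t)
    ((Continuous.intervalIntegrable (by continuity) 0 t))
    (fun x hx => PA_le hS ⟨hx.1, le_trans hx.2 ht.2⟩)
  have h2 : (∫ s in (0:ℝ)..t, 0.835 * (1 - s^2)/2) = 0.835 * (t - t^3/3)/2 := by
    rw [int_poly]; ring
  have h3 : 0.835 * (t - t^3/3)/2 ≤ 0.835/3 := by nlinarith [sq_nonneg (t-1), ht.1, ht.2]
  calc PU h t ≤ _ := hm
    _ = _ := h2
    _ ≤ _ := h3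

lemma ext_dist (h g : X) (s : ℝ) : |ext h s - ext g s| ≤ dist h g := by
  have := ContinuousMap.dist_apply_le_dist (f := h) (g := g) (Set.projIcc 0 1 zero_le_one s)
  simpa [ext, Real.dist_eq] using this

lemma PB_dist (h g : X) {t : ℝ} (ht : t ∈ Set.Icc (0:ℝ) 1) :
    |PB h t - PB g t| ≤ dist h g * t := by
  have hsub : PB h t - PB g t = ∫ s in (0:ℝ)..t, (ext h s - ext g s) := by
    rw [intervalIntegral.integral_sub ((cont_ext h).intervalIntegrable 0 t)
      ((cont_ext g).intervalIntegrable 0 t)]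
    rfl
  rw [hsub]
  have := intervalIntegral.norm_integral_le_of_norm_le_const
    (a := 0) (b := t) (C := dist h g) (f := fun s => ext h s - ext g s)
    (fun x _ => by simpa [Real.norm_eq_abs] using ext_dist h g x)
  simpa [Real.norm_eq_abs, abs_of_nonneg ht.1] using this

lemma PA_dist (h g : X) {t : ℝ} (ht : t ∈ Set.Icc (0:ℝ) 1) :
    |PA h t - PA g t| ≤ dist h g * (1 - t^2)/2 := by
  have hsub : PA h t - PA g t = ∫ s in t..(1:ℝ), (PB h s - PB g s) := by
    rw [intervalIntegral.integral_sub ((cont_PB h).intervalIntegrable t 1)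
      ((cont_PB g).intervalIntegrable t 1)]
    rfl
  rw [hsub]
  have h1 := intervalIntegral.abs_integral_le_integral_abs (μ := volume)
    (f := fun s => PB h s - PB g s) ht.2
  have h2 := intervalIntegral.integral_mono_on (μ := volume) (a := t) (b := 1)
    (f := fun s => |PB h s - PB g s|) (g := fun s => dist h g * s) ht.2
    (((cont_PB h).sub (cont_PB g)).abs.intervalIntegrable t 1)
    ((continuous_const.mul continuous_id).intervalIntegrable t 1)
    (fun x hx => PB_dist h g ⟨le_trans ht.1 hx.1, hx.2⟩)
  calc |∫ s in t..(1:ℝ), (PB h s - PB g s)| ≤ _ := h1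
    _ ≤ ∫ s in t..(1:ℝ), dist h g * s := h2
    _ = dist h g * (1 - t^2)/2 := by rw [int_linear]; ring

lemma PU_dist (h g : X) {t : ℝ} (ht : t ∈ Set.Icc (0:ℝ) 1) :
    |PU h t - PU g t| ≤ dist h g / 3 := by
  have hsub : PU h t - PU g t = ∫ s in (0:ℝ)..t, (PA h s - PA g s) := by
    rw [intervalIntegral.integral_sub ((cont_PA h).intervalIntegrable 0 t)
      ((cont_PA g).intervalIntegrable 0 t)]
    rfl
  rw [hsub]
  have h1 := intervalIntegral.abs_integral_le_integral_abs (μ := volume)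
    (f := fun s => PA h s - PA g s) ht.1
  have h2 := intervalIntegral.integral_mono_on (μ := volume) (a := 0) (b := t)
    (f := fun s => |PA h s - PA g s|) (g := fun s => dist h g * (1 - s^2)/2) ht.1
    (((cont_PA h).sub (cont_PA g)).abs.intervalIntegrable 0 t)
    ((Continuous.intervalIntegrable (by continuity) 0 t))
    (fun x hx => PA_dist h g ⟨hx.1, le_trans hx.2 ht.2⟩)
  have h3 : (∫ s in (0:ℝ)..t, dist h g * (1 - s^2)/2) = dist h g * (t - t^3/3)/2 := by
    rw [int_poly]; ring
  have h4 : dist h g * (t - t^3/3)/2 ≤ dist h g / 3 := by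
    nlinarith [dist_nonneg (x := h) (y := g), sq_nonneg (t-1), ht.1, ht.2,
      mul_nonneg (dist_nonneg (x := h) (y := g)) ht.1]
  calc |∫ s in (0:ℝ)..t, (PA h s - PA g s)| ≤ _ := h1
    _ ≤ _ := h2
    _ = _ := h3
    _ ≤ _ := h4

lemma exp_third : Real.exp (0.835/3) ≤ 1.4 := by
  have h1 : Real.exp (0.835/3) ≤ Real.exp (1/3) := Real.exp_le_exp.mpr (by norm_num)
  have h2 : (Real.exp (1/3))^3 = Real.exp 1 := by
    rw [← Real.exp_nat_mul]; norm_num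
  have h3 : Real.exp 1 ≤ (1.4:ℝ)^3 := by
    have := Real.exp_one_lt_d9
    nlinarith
  have h4 : Real.exp (1/3) ≤ 1.4 := by
    refine le_of_pow_le_pow_left₀ (n := 3) (by norm_num) (by norm_num) ?_
    rw [h2]; exact h3
  linarith

lemma exp_lip {a b : ℝ} (ha : a ∈ Set.Icc (0:ℝ) (0.835/3)) (hb : b ∈ Set.Icc (0:ℝ) (0.835/3)) :
    |Real.exp a - Real.exp b| ≤ 1.4 * |a - b| := by
  have key : ∀ x y : ℝ, x ∈ Set.Icc (0:ℝ) (0.835/3) → y ∈ Set.Icc (0:ℝ) (0.835/3) →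
      x ≤ y → Real.exp y - Real.exp x ≤ 1.4 * (y - x) := by
    intro x y hx hy hxy
    have h1 : Real.exp (x - y) * Real.exp y = Real.exp x := by rw [← Real.exp_add]; ring_nf
    have h2 : (x - y) + 1 ≤ Real.exp (x - y) := Real.add_one_le_exp _
    have h3 : Real.exp y ≤ 1.4 := le_trans (Real.exp_le_exp.mpr hy.2) exp_third
    have h4 : (0:ℝ) < Real.exp y := Real.exp_pos y
    nlinarith [mul_le_mul_of_nonneg_right h2 h4.le]
  rcases le_total a b with hab | hab
  · rw [abs_of_nonpos (by simp [Real.exp_le_exp, hab]), abs_of_nonpos (by linarith)]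
    have := key a b ha hb hab; linarith
  · rw [abs_of_nonneg (by simp [Real.exp_le_exp, hab]), abs_of_nonneg (by linarith)]
    have := key b a hb ha hab; linarith

def T (h : X) : X :=
  ⟨fun x => (1/4) * ((x:ℝ) + Real.exp (PU h x) + (PA h x)^2 - PB h x), by
    have hc : Continuous fun x : Set.Icc (0:ℝ) 1 => (x:ℝ) := continuous_subtype_val
    exact continuous_const.mul (((hc.add ((Real.continuous_exp.comp
      ((cont_PU h).comp hc)))).add (((cont_PA h).comp hc).pow 2)).sub
      ((cont_PB h).comp hc))⟩

lemma T_apply (h : X) (x : Set.Icc (0:ℝ) 1) :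
    T h x = (1/4) * ((x:ℝ) + Real.exp (PU h (x:ℝ)) + (PA h (x:ℝ))^2 - PB h (x:ℝ)) := rfl

lemma T_mem {h : X} (hS : h ∈ S) : T h ∈ S := by
  rintro ⟨x, hx⟩
  rw [T_apply]
  have hB0 := PB_nonneg hS hx.1
  have hB1 := PB_le hS hx.1
  have hA0 := PA_nonneg hS hx
  have hA1 := PA_le_half hS hx
  have hU0 := PU_nonneg hS hx
  have hU1 := PU_le hS hx
  have he1 : (1:ℝ) ≤ Real.exp (PU h x) := Real.one_le_exp hU0
  have he2 : Real.exp (PU h x) ≤ 1.4 := le_trans (Real.exp_le_exp.mpr hU1) exp_third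
  constructor
  · nlinarith [hx.1, hx.2, sq_nonneg (PA h x)]
  · nlinarith [hx.1, hx.2, sq_nonneg (PA h x)]

lemma key {h g : X}
    (hUh : ∀ t ∈ Set.Icc (0:ℝ) 1, PU h t ∈ Set.Icc 0 (0.835/3))
    (hUg : ∀ t ∈ Set.Icc (0:ℝ) 1, PU g t ∈ Set.Icc 0 (0.835/3))
    (hAh : ∀ t ∈ Set.Icc (0:ℝ) 1, PA h t ∈ Set.Icc 0 (0.835/2))
    (hAg : ∀ t ∈ Set.Icc (0:ℝ) 1, PA g t ∈ Set.Icc 0 (0.835/2)) :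
    dist (T h) (T g) ≤ (19/40) * dist h g := by
  rw [ContinuousMap.dist_le (by positivity)]
  rintro ⟨x, hx⟩
  rw [Real.dist_eq, T_apply, T_apply]
  have e1 : |Real.exp (PU h x) - Real.exp (PU g x)| ≤ 1.4 * (dist h g / 3) := by
    refine le_trans (exp_lip (hUh x hx) (hUg x hx)) ?_
    have := PU_dist h g hx
    nlinarith
  have e2 : |(PA h x)^2 - (PA g x)^2| ≤ 0.835 * (dist h g * (1 - x^2)/2) := by
    have hring : (PA h x)^2 - (PA g x)^2 = (PA h x + PA g x) * (PA h x - PA g x) := by ring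
    rw [hring, abs_mul]
    have hsum : |PA h x + PA g x| ≤ 0.835 := by
      rw [abs_of_nonneg (by linarith [(hAh x hx).1, (hAg x hx).1])]
      linarith [(hAh x hx).2, (hAg x hx).2]
    exact mul_le_mul hsum (PA_dist h g hx) (abs_nonneg _)
      (by norm_num)
  have e3 := PB_dist h g hx
  have hd0 : (0:ℝ) ≤ dist h g := dist_nonneg
  obtain ⟨l1, r1⟩ := abs_le.mp e1
  obtain ⟨l2, r2⟩ := abs_le.mp e2
  obtain ⟨l3, r3⟩ := abs_le.mp e3
  have hgoal : (1/4) * ((x:ℝ) + Real.exp (PU h x) + (PA h x)^2 - PB h x)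
      - (1/4) * ((x:ℝ) + Real.exp (PU g x) + (PA g x)^2 - PB g x)
      = (1/4) * ((Real.exp (PU h x) - Real.exp (PU g x))
        + ((PA h x)^2 - (PA g x)^2) - (PB h x - PB g x)) := by ring
  rw [hgoal, abs_le]
  constructor
  · nlinarith [hx.1, hx.2, sq_nonneg x, mul_nonneg hd0 hx.1]
  · nlinarith [hx.1, hx.2, sq_nonneg x, mul_nonneg hd0 hx.1]

lemma PU_mem {h : X} (hS : h ∈ S) : ∀ t ∈ Set.Icc (0:ℝ) 1, PU h t ∈ Set.Icc 0 (0.835/3) :=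
  fun t ht => ⟨PU_nonneg hS ht, PU_le hS ht⟩

lemma PA_mem {h : X} (hS : h ∈ S) : ∀ t ∈ Set.Icc (0:ℝ) 1, PA h t ∈ Set.Icc 0 (0.835/2) :=
  fun t ht => ⟨PA_nonneg hS ht, PA_le_half hS ht⟩

lemma S_closed : IsClosed S := by
  have : S = ⋂ x : Set.Icc (0:ℝ) 1, {h : X | h x ∈ Set.Icc (0:ℝ) 0.835} := by
    ext h; simp [S, Set.mem_iInter]
  rw [this]
  exact isClosed_iInter fun x => isClosed_Icc.preimage (continuous_eval_const x)

instance : CompleteSpace S := S_closed.completeSpace_coe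

instance : Nonempty S := ⟨⟨ContinuousMap.const _ 0, fun x => by norm_num⟩⟩

def T' : S → S := fun h => ⟨T h, T_mem h.2⟩

lemma contracting : ContractingWith (19/40 : NNReal) T' := by
  constructor
  · rw [← NNReal.coe_lt_coe]; norm_num
  · apply LipschitzWith.of_dist_le_mul
    intro h g
    have hk := key (PU_mem h.2) (PU_mem g.2) (PA_mem h.2) (PA_mem g.2)
    have hc : ((19/40 : NNReal) : ℝ) = 19/40 := by norm_num
    rw [Subtype.dist_eq, Subtype.dist_eq, hc]
    exact hk

def hstar : X := (contracting.fixedPoint T').1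

lemma hstar_mem : hstar ∈ S := (contracting.fixedPoint T').2

lemma hstar_fixed : T hstar = hstar := by
  have := contracting.fixedPoint_isFixedPt
  exact congrArg Subtype.val this

lemma fixed_unique {g : X}
    (hUg : ∀ t ∈ Set.Icc (0:ℝ) 1, PU g t ∈ Set.Icc 0 (0.835/3))
    (hAg : ∀ t ∈ Set.Icc (0:ℝ) 1, PA g t ∈ Set.Icc 0 (0.835/2))
    (hfix : T g = g) : g = hstar := by
  have hk := key hUg (PU_mem hstar_mem) hAg (PA_mem hstar_mem)
  rw [hfix, hstar_fixed] at hk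
  have h0 : dist g hstar = 0 := by linarith [dist_nonneg (x := g) (y := hstar)]
  exact dist_eq_zero.mp h0

def u : ℝ → ℝ := PU hstar

lemma deriv_u : deriv u = PA hstar := deriv_PU hstar

lemma deriv2_u : deriv (deriv u) = fun s => -(PB hstar s) := by
  rw [show deriv u = PA hstar from deriv_PU hstar, deriv_PA]

lemma hstar_apply {t : ℝ} (ht : t ∈ Set.Icc (0:ℝ) 1) :
    ext hstar t = (1/4) * (t + Real.exp (PU hstar t) + (PA hstar t)^2 - PB hstar t) := by
  rw [ext_eq hstar ht]
  conv_lhs => rw [← hstar_fixed]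
  exact T_apply hstar ⟨t, ht⟩

lemma u_isSolution : IsSolution u := by
  refine ⟨contDiff_PU hstar, ?_, ?_, ?_, ?_⟩
  · intro t ht
    have hmem : t ∈ Set.Icc (0:ℝ) 1 := ⟨ht.1.le, ht.2.le⟩
    have hD : HasDerivAt (fun s => -(PB hstar s)) (-(ext hstar t)) t :=
      (hasDerivAt_PB hstar t).neg
    rw [deriv2_u, deriv_u]
    convert hD using 1
    rw [hstar_apply hmem]
    show -(1 / 4) * (t + Real.exp (u t) + PA hstar t ^ 2 + -(PB hstar t)) = _
    have hu : u t = PU hstar t := rfl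
    rw [hu]; ring
  · show PU hstar 0 = 0
    simp [PU, intervalIntegral.integral_same]
  · rw [deriv2_u]
    simp [PB, intervalIntegral.integral_same]
  · rw [deriv_u]
    simp [PA, intervalIntegral.integral_same]

lemma u_inBounds : InBounds u := by
  intro t ht
  refine ⟨PU_mem hstar_mem t ht, ?_, ?_⟩
  · rw [deriv_u]; exact PA_mem hstar_mem t ht
  · rw [deriv2_u]
    have h1 := PB_nonneg hstar_mem ht.1
    have h2 := PB_le hstar_mem ht.1
    rw [abs_le]
    constructor <;> simp <;> nlinarith [ht.1, ht.2]

lemma u_nonneg : ∀ t ∈ Set.Icc (0:ℝ) 1, 0 ≤ u t := fun t ht => PU_nonneg hstar_mem ht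

lemma u_mono : MonotoneOn u (Set.Icc (0:ℝ) 1) := by
  apply monotoneOn_of_deriv_nonneg (convex_Icc 0 1) (cont_PU hstar).continuousOn
  · exact (diff_PU hstar).differentiableOn
  · intro x hx
    rw [interior_Icc] at hx
    rw [deriv_PU]
    exact PA_nonneg hstar_mem ⟨hx.1.le, hx.2.le⟩

lemma uniqueness {v : ℝ → ℝ} (hsol : IsSolution v) (hbd : InBounds v) :
    ∀ t ∈ Set.Icc (0:ℝ) 1, v t = u t := by
  obtain ⟨hC2, hODE, hv0, hv''0, hv'1⟩ := hsol
  have hC2' : ContDiff ℝ ((1:WithTop ℕ∞) + 1) v := by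
    convert hC2 using 2
    norm_num
  have hdv : Differentiable ℝ v := (contDiff_succ_iff_deriv.mp hC2').1
  have hC1 : ContDiff ℝ 1 (deriv v) := (contDiff_succ_iff_deriv.mp hC2').2.2
  have hdv2 : Differentiable ℝ (deriv v) := (contDiff_one_iff_deriv.mp hC1).1
  have hcF : Continuous (deriv (deriv v)) := (contDiff_one_iff_deriv.mp hC1).2
  set F := deriv (deriv v) with hF
  have hcv : Continuous v := hdv.continuous
  have hcv' : Continuous (deriv v) := hdv2.continuous
  set w : X := ⟨fun x => (1/4) * ((x:ℝ) + Real.exp (v x) + (deriv v x)^2 + F x),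
    continuous_const.mul ((((continuous_subtype_val).add
      (Real.continuous_exp.comp (hcv.comp continuous_subtype_val))).add
      ((hcv'.comp continuous_subtype_val).pow 2)).add (hcF.comp continuous_subtype_val))⟩
    with hw
  have hext : ∀ t, t ∈ Set.Icc (0:ℝ) 1 →
      ext w t = (1/4) * (t + Real.exp (v t) + (deriv v t)^2 + F t) := by
    intro t ht; rw [ext_eq w ht]; simp [hw]
  have hB : ∀ t ∈ Set.Icc (0:ℝ) 1, PB w t = -(F t) := by
    intro t ht
    have hderiv : ∀ x ∈ Set.Ioo (0:ℝ) t, HasDerivWithinAt F (-(ext w x)) (Set.Ioi x) x := by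
      intro x hx
      have hx1 : x ∈ Set.Ioo (0:ℝ) 1 := ⟨hx.1, lt_of_lt_of_le hx.2 ht.2⟩
      have hODEx := hODE x hx1
      have heq : -(ext w x) = -(1 / 4) * (x + Real.exp (v x) + (deriv v x)^2 + F x) := by
        rw [hext x ⟨hx1.1.le, hx1.2.le⟩]; ring
      rw [heq]
      exact hODEx.hasDerivWithinAt
    have hFTC := intervalIntegral.integral_eq_sub_of_hasDeriv_right_of_le ht.1
      (hcF.continuousOn) hderiv ((cont_ext w).neg.intervalIntegrable 0 t)
    have hPB : PB w t = -(∫ s in (0:ℝ)..t, -(ext w s)) := by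
      simp [PB]
    rw [hPB, hFTC, hv''0]
    ring
  have hA : ∀ t ∈ Set.Icc (0:ℝ) 1, PA w t = deriv v t := by
    intro t ht
    have hcongr : PA w t = ∫ s in t..(1:ℝ), -(F s) := by
      apply intervalIntegral.integral_congr
      intro s hs
      rw [Set.uIcc_of_le ht.2] at hs
      exact hB s ⟨le_trans ht.1 hs.1, hs.2⟩
    have hFTC : ∫ s in t..(1:ℝ), F s = deriv v 1 - deriv v t :=
      intervalIntegral.integral_eq_sub_of_hasDerivAt
        (fun x _ => (hdv2 x).hasDerivAt) (hcF.intervalIntegrable t 1)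
    rw [hcongr, intervalIntegral.integral_neg, hFTC, hv'1]
    ring
  have hU : ∀ t ∈ Set.Icc (0:ℝ) 1, PU w t = v t := by
    intro t ht
    have hcongr : PU w t = ∫ s in (0:ℝ)..t, deriv v s := by
      apply intervalIntegral.integral_congr
      intro s hs
      rw [Set.uIcc_of_le ht.1] at hs
      exact hA s ⟨hs.1, le_trans hs.2 ht.2⟩
    have hFTC : ∫ s in (0:ℝ)..t, deriv v s = v t - v 0 :=
      intervalIntegral.integral_eq_sub_of_hasDerivAt
        (fun x _ => (hdv x).hasDerivAt) (hcv'.intervalIntegrable 0 t)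
    rw [hcongr, hFTC, hv0]
    ring
  have hfix : T w = w := by
    ext x
    obtain ⟨x, hx⟩ := x
    rw [T_apply]
    have hwx : w ⟨x, hx⟩ = (1/4) * (x + Real.exp (v x) + (deriv v x)^2 + F x) := by
      simp [hw]
    rw [hwx, hU x hx, hA x hx, hB x hx]
    ring
  have hUw : ∀ t ∈ Set.Icc (0:ℝ) 1, PU w t ∈ Set.Icc 0 (0.835/3) := fun t ht => by
    rw [hU t ht]; exact (hbd t ht).1
  have hAw : ∀ t ∈ Set.Icc (0:ℝ) 1, PA w t ∈ Set.Icc 0 (0.835/2) := fun t ht => by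
    rw [hA t ht]; exact (hbd t ht).2.1
  have hwh : w = hstar := fixed_unique hUw hAw hfix
  intro t ht
  rw [← hU t ht, hwh]
  rfl

end Ex441

theorem example_441 :
    ∃ u : ℝ → ℝ, (IsSolution u ∧ InBounds u ∧
      (∀ t ∈ Set.Icc (0:ℝ) 1, 0 ≤ u t) ∧ MonotoneOn u (Set.Icc (0:ℝ) 1)) ∧
      ∀ v : ℝ → ℝ, IsSolution v ∧ InBounds v → ∀ t ∈ Set.Icc (0:ℝ) 1, v t = u t := by
  refine ⟨Ex441.u, ⟨Ex441.u_isSolution, Ex441.u_inBounds, Ex441.u_nonneg, Ex441.u_mono⟩, ?_⟩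
  rintro v ⟨hsol, hbd⟩
  exact Ex441.uniqueness hsol hbd
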